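/- If F is an m-uniform family with no m+1 disjointly representable sets, and every set in F contains a fixed set Y of size s, then |F| ≤ C(2m - s, m). -/

import Mathlib

def DisjRep {α : Type*} {k : ℕ} (A : Fin k → Finset α) : Prop :=
  ∃ x : Fin k → α, ∀ i j, x i ∈ A j ↔ i = j

lemma exists_blocker {α : Type*} [DecidableEq α] (m : ℕ)
    (F : Finset (Finset α)) (hcard : ∀ A ∈ F, A.card = m)
    (hnoDR : ¬ ∃ g : Fin (m + 1) → Finset α,
      Function.Injective g ∧ (∀ i, g i ∈ F) ∧ DisjRep g)
    (A : Finset α) (hA : A ∈ F) :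
    ∃ T : Finset α, T ⊆ F.sup id \ A ∧ T.card ≤ m ∧
      ∀ G ∈ F, G ≠ A → ∃ p ∈ T, p ∈ G ∧ p ∉ A := by
  classical
  set Ω : Finset α := F.sup id with hΩ
  set Pr : Finset α → Prop := fun T => ∀ G ∈ F, G ≠ A → ∃ p ∈ T, p ∈ G ∧ p ∉ A with hPr
  set C : Finset (Finset α) := (Ω \ A).powerset.filter Pr with hC
  have hmemC : ∀ T, T ∈ C ↔ T ⊆ Ω \ A ∧ Pr T := by
    intro T
    simp [hC, Finset.mem_filter, Finset.mem_powerset]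
  have hfull : (Ω \ A) ∈ C := by
    rw [hmemC]
    refine ⟨subset_rfl, ?_⟩
    intro G hG hGA
    have hGs : G ⊆ Ω := Finset.le_sup (f := id) hG
    have hne : (G \ A).Nonempty := by
      rw [Finset.sdiff_nonempty]
      intro hsub
      exact hGA (Finset.eq_of_subset_of_card_le hsub
        (le_of_eq ((hcard A hA).trans (hcard G hG).symm)))
    obtain ⟨p, hp⟩ := hne
    rw [Finset.mem_sdiff] at hp
    exact ⟨p, Finset.mem_sdiff.mpr ⟨hGs hp.1, hp.2⟩, hp.1, hp.2⟩
  obtain ⟨T, hTC, hTmin⟩ := C.exists_min_image Finset.card ⟨_, hfull⟩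
  rw [hmemC] at hTC
  obtain ⟨hTsub, hTP⟩ := hTC
  refine ⟨T, hTsub, ?_, hTP⟩
  have key : ∀ x ∈ T, ∃ G, G ∈ F ∧ G ≠ A ∧ x ∈ G ∧
      (∀ p ∈ T, p ∈ G → p ∉ A → p = x) := by
    intro x hx
    have herase : ¬ (∀ G ∈ F, G ≠ A → ∃ p ∈ T.erase x, p ∈ G ∧ p ∉ A) := by
      intro hPe
      have hmem : T.erase x ∈ C :=
        (hmemC _).mpr ⟨(Finset.erase_subset _ _).trans hTsub, hPe⟩
      have hge := hTmin _ hmem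
      have hlt : (T.erase x).card < T.card := Finset.card_erase_lt_of_mem hx
      omega
    push_neg at herase
    obtain ⟨G, hG, hGA, hGe⟩ := herase
    refine ⟨G, hG, hGA, ?_, ?_⟩
    · obtain ⟨p, hpT, hpG, hpA⟩ := hTP G hG hGA
      have hpx : p = x := by
        by_contra hne
        exact hpA (hGe p (Finset.mem_erase.mpr ⟨hne, hpT⟩) hpG)
      rwa [hpx] at hpG
    · intro p hpT hpG hpA
      by_contra hne
      exact hpA (hGe p (Finset.mem_erase.mpr ⟨hne, hpT⟩) hpG)
  by_contra hle
  push_neg at hle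
  obtain ⟨S, hST, hScard⟩ := Finset.exists_subset_card_eq hle
  let e := Finset.equivFinOfCardEq hScard
  let χ : Fin (m + 1) → α := fun i => (e.symm i : α)
  have hχT : ∀ i, χ i ∈ T := fun i => hST (e.symm i).2
  have hχA : ∀ i, χ i ∉ A := by
    intro i
    have := hTsub (hχT i)
    rw [Finset.mem_sdiff] at this
    exact this.2
  have hχinj : Function.Injective χ := by
    intro i j h
    have : e.symm i = e.symm j := Subtype.ext h
    exact e.symm.injective this
  choose G hGF hGA hxG hpriv using fun i : Fin (m + 1) => key (χ i) (hχT i)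
  apply hnoDR
  have hDR : ∀ i j, χ i ∈ G j ↔ i = j := by
    intro i j
    constructor
    · intro h
      exact hχinj (hpriv j (χ i) (hχT i) h (hχA i))
    · intro h
      rw [h]
      exact hxG j
  refine ⟨G, ?_, hGF, χ, hDR⟩
  intro i j h
  have : χ i ∈ G j := by rw [← h]; exact hxG i
  exact (hDR i j).mp this

theorem stmt_13 {α : Type*} [DecidableEq α] (m s : ℕ) (hsm : s ≤ m)
    (F : Finset (Finset α)) (hcard : ∀ A ∈ F, A.card = m)
    (hnoDR : ¬ ∃ g : Fin (m + 1) → Finset α,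
      Function.Injective g ∧ (∀ i, g i ∈ F) ∧ DisjRep g)
    (Y : Finset α) (hY : Y.card = s) (hYsub : ∀ A ∈ F, Y ⊆ A) :
    F.card ≤ Nat.choose (2 * m - s) m := by
  classical
  set r : ℕ := m - s with hrdef
  set Ω : Finset α := F.sup id with hΩdef
  have hsubΩ : ∀ A ∈ F, A ⊆ Ω := fun A hA => Finset.le_sup (f := id) hA
  -- injective embedding of points into nonzero reals
  set ι : α → ℝ := fun p => if h : p ∈ Ω then ((Ω.equivFin ⟨p, h⟩ : ℕ) + 1 : ℝ) else 0 with hιdef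
  have hιinj : ∀ p ∈ Ω, ∀ q ∈ Ω, ι p = ι q → p = q := by
    intro p hp q hq h
    simp only [hιdef, dif_pos hp, dif_pos hq] at h
    have h2 : ((Ω.equivFin ⟨p, hp⟩ : ℕ) : ℝ) = ((Ω.equivFin ⟨q, hq⟩ : ℕ) : ℝ) := by linarith
    have h3 : (Ω.equivFin ⟨p, hp⟩ : ℕ) = (Ω.equivFin ⟨q, hq⟩ : ℕ) := by exact_mod_cast h2
    have h4 : Ω.equivFin ⟨p, hp⟩ = Ω.equivFin ⟨q, hq⟩ := Fin.ext h3
    have h5 := Ω.equivFin.injective h4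
    exact Subtype.mk_eq_mk.mp h5
  -- linear forms and polynomials
  set L : ℝ → MvPolynomial (Fin (m + 1)) ℝ :=
    fun a => ∑ j : Fin (m + 1), MvPolynomial.C (a ^ (j : ℕ)) * MvPolynomial.X j with hLdef
  have hLhom : ∀ a : ℝ, (L a).IsHomogeneous 1 := by
    intro a
    apply MvPolynomial.IsHomogeneous.sum
    intro j _
    exact MvPolynomial.isHomogeneous_C_mul_X _ _
  set P : Finset α → MvPolynomial (Fin (m + 1)) ℝ :=
    fun A => ∏ p ∈ (A \ Y), L (ι p) with hPdef
  have hPhom : ∀ A ∈ F, (P A).IsHomogeneous r := by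
    intro A hA
    have hc : (A \ Y).card = r := by
      rw [Finset.card_sdiff_of_subset (hYsub A hA), hcard A hA, hY]
    have := MvPolynomial.IsHomogeneous.prod (A \ Y) (fun p => L (ι p)) (fun _ => 1)
      (fun p _ => hLhom (ι p))
    simpa [Finset.sum_const, hc] using this
  -- evaluation points from blockers
  have hU : ∀ A ∈ F, ∃ u : Fin (m + 1) → ℝ,
      MvPolynomial.eval u (P A) ≠ 0 ∧
      ∀ G ∈ F, G ≠ A → MvPolynomial.eval u (P G) = 0 := by
    intro A hA
    obtain ⟨T, hTsub, hTcard, hThit⟩ := exists_blocker m F hcard hnoDR A hA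
    have hTΩ : T ⊆ Ω := hTsub.trans (Finset.sdiff_subset)
    have hTA : ∀ c ∈ T, c ∉ A := by
      intro c hc
      have := hTsub hc
      rw [Finset.mem_sdiff] at this
      exact this.2
    set q : Polynomial ℝ := ∏ c ∈ T, (Polynomial.X - Polynomial.C (ι c)) with hqdef
    have hqdeg : q.natDegree < m + 1 := by
      have h1 : q.natDegree ≤ ∑ c ∈ T, (Polynomial.X - Polynomial.C (ι c)).natDegree :=
        Polynomial.natDegree_prod_le _ _
      have h2 : ∀ c ∈ T, (Polynomial.X - Polynomial.C (ι c)).natDegree = 1 := fun c _ =>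
        Polynomial.natDegree_X_sub_C (ι c)
      rw [Finset.sum_congr rfl h2] at h1
      simp only [Finset.sum_const, smul_eq_mul, mul_one] at h1
      omega
    set u : Fin (m + 1) → ℝ := fun j => q.coeff (j : ℕ) with hudef
    have hevalL : ∀ a : ℝ, MvPolynomial.eval u (L a) = q.eval a := by
      intro a
      rw [hLdef]
      rw [map_sum]
      simp only [map_mul, MvPolynomial.eval_C, MvPolynomial.eval_X]
      simp only [hudef]
      have hfin : ∑ j : Fin (m + 1), a ^ (j : ℕ) * q.coeff (j : ℕ)
          = ∑ j ∈ Finset.range (m + 1), a ^ j * q.coeff j :=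
        Fin.sum_univ_eq_sum_range (fun j => a ^ j * q.coeff j) (m + 1)
      rw [hfin, Polynomial.eval_eq_sum_range' hqdeg]
      apply Finset.sum_congr rfl
      intro i _
      ring
    have hqeval : ∀ x : ℝ, q.eval x = ∏ c ∈ T, (x - ι c) := by
      intro x
      rw [hqdef, Polynomial.eval_prod]
      simp
    refine ⟨u, ?_, ?_⟩
    · rw [hPdef, map_prod]
      rw [Finset.prod_ne_zero_iff]
      intro p hp
      rw [Finset.mem_sdiff] at hp
      rw [hevalL, hqeval]
      rw [Finset.prod_ne_zero_iff]
      intro c hc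
      rw [sub_ne_zero]
      intro hiota
      have hpc : p = c := hιinj p (hsubΩ A hA hp.1) c (hTΩ hc) hiota
      exact hTA c hc (hpc ▸ hp.1)
    · intro G hG hGA
      obtain ⟨p, hpT, hpG, hpA⟩ := hThit G hG hGA
      have hpY : p ∉ Y := fun hmem => hpA (hYsub A hA hmem)
      rw [hPdef, map_prod]
      apply Finset.prod_eq_zero (Finset.mem_sdiff.mpr ⟨hpG, hpY⟩)
      rw [hevalL, hqeval]
      exact Finset.prod_eq_zero hpT (sub_self _)
  -- linear independence
  set w : {A // A ∈ F} → (Sym (Fin (m + 1)) r → ℝ) :=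
    fun A v => MvPolynomial.coeff (Multiset.toFinsupp (v : Multiset (Fin (m + 1)))) (P A.1)
    with hwdef
  have hw : LinearIndependent ℝ w := by
    rw [linearIndependent_iff']
    intro t g hsum i₀ hi₀
    obtain ⟨u, hu0, hu⟩ := hU i₀.1 i₀.2
    set Q : MvPolynomial (Fin (m + 1)) ℝ := ∑ i ∈ t, g i • P i.1 with hQdef
    have hQ0 : Q = 0 := by
      apply MvPolynomial.ext
      intro d
      rw [MvPolynomial.coeff_zero, hQdef, MvPolynomial.coeff_sum]
      by_cases hd : d.degree = r
      · have hcd : Multiset.card (Finsupp.toMultiset d) = r := by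
          rw [Finsupp.card_toMultiset, ← hd]
          rfl
        have hs := congrFun hsum ⟨Finsupp.toMultiset d, hcd⟩
        simp only [Finset.sum_apply, Pi.smul_apply, Pi.zero_apply, smul_eq_mul, hwdef] at hs
        have hs2 : ∑ x ∈ t, g x *
            MvPolynomial.coeff (Multiset.toFinsupp (Finsupp.toMultiset d)) (P ↑x) = 0 := by erw [Finset.sum_apply] at hs; exact hs
        rw [Finsupp.toMultiset_toFinsupp] at hs2
        rw [← hs2]
        apply Finset.sum_congr rfl
        intro i _
        rw [MvPolynomial.coeff_smul, smul_eq_mul]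
      · apply Finset.sum_eq_zero
        intro i _
        rw [MvPolynomial.coeff_smul, (hPhom i.1 i.2).coeff_eq_zero hd, smul_zero]
    have heval := congrArg (MvPolynomial.eval u) hQ0
    rw [hQdef, map_sum, map_zero] at heval
    have heval2 : ∑ i ∈ t, g i * MvPolynomial.eval u (P i.1) = 0 := by
      rw [← heval]
      apply Finset.sum_congr rfl
      intro i _
      rw [MvPolynomial.smul_eq_C_mul, map_mul, MvPolynomial.eval_C]
    rw [Finset.sum_eq_single i₀] at heval2
    · rcases mul_eq_zero.mp heval2 with h | h
      · exact h
      · exact absurd h hu0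
    · intro b _ hbne
      have hb1 : b.1 ≠ i₀.1 := fun hx => hbne (Subtype.ext hx)
      rw [hu b.1 b.2 hb1, mul_zero]
    · intro hmem
      exact absurd hi₀ hmem
  -- counting
  have hcard1 : F.card = Fintype.card {A // A ∈ F} := (Fintype.card_coe F).symm
  have hle := hw.fintype_card_le_finrank
  rw [Module.finrank_fintype_fun_eq_card] at hle
  have hsym : Fintype.card (Sym (Fin (m + 1)) r) = (m + r).choose r := by
    rw [Sym.card_sym_eq_choose, Fintype.card_fin]
    congr 1
    omega
  have hfinal : (m + r).choose r = Nat.choose (2 * m - s) m := by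
    have h2 : (m + r) - r = m := by omega
    have h1 : (m + r).choose m = (m + r).choose r := by
      have := Nat.choose_symm (Nat.le_add_left r m)
      rwa [h2] at this
    have h3 : m + r = 2 * m - s := by omega
    rw [← h1, h3]
  rw [hcard1]
  calc Fintype.card {A // A ∈ F} ≤ Fintype.card (Sym (Fin (m + 1)) r) := hle
    _ = (m + r).choose r := hsym
    _ = Nat.choose (2 * m - s) m := hfinal
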